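/- arXiv:1510.06936 — 3 statements merged into one kernel-verified Lean document; each statement's English description precedes it below -/
import Mathlib

section
/- Let α0, α1, α2, β1, β2, β3 be real numbers with β2, β3 > 0, α0, α1, α2, β1 ≥ 0, satisfying α1·β1 − α0·β2 ≥ 0, α1² + α0·β2² ≥ α1·β1·β2, α0·β2 + β2·β1² ≥ α1·β1, and α1·β3 = α2·β2. Define k2 = √((α1·β1 − α0·β2)/β2), k1 = α1/β2 − k2, k3 = β1 − k2, b = β3, c = β2. Then b, c > 0, k1, k2, k3 ≥ 0, and moreover b·(k1 + k2) = α2, c·(k1 + k2) = α1, k1·k2 + k2·k3 + k1·k3 = α0, and k2 + k3 = β1. -/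
theorem stmt_11 (α0 α1 α2 β1 β2 β3 : ℝ)
    (hβ2 : 0 < β2) (hβ3 : 0 < β3)
    (hα0 : 0 ≤ α0) (hα1 : 0 ≤ α1) (hα2 : 0 ≤ α2) (hβ1 : 0 ≤ β1)
    (h1 : α1 * β1 - α0 * β2 ≥ 0)
    (h2 : α1 ^ 2 + α0 * β2 ^ 2 ≥ α1 * β1 * β2)
    (h3 : α0 * β2 + β2 * β1 ^ 2 ≥ α1 * β1)
    (h4 : α1 * β3 = α2 * β2)
    (k2 k1 k3 b c : ℝ)
    (hk2 : k2 = Real.sqrt ((α1 * β1 - α0 * β2) / β2))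
    (hk1 : k1 = α1 / β2 - k2) (hk3 : k3 = β1 - k2)
    (hb : b = β3) (hc : c = β2) :
    0 < b ∧ 0 < c ∧ 0 ≤ k1 ∧ 0 ≤ k2 ∧ 0 ≤ k3 ∧
    b * (k1 + k2) = α2 ∧ c * (k1 + k2) = α1 ∧
    k1 * k2 + k2 * k3 + k1 * k3 = α0 ∧ k2 + k3 = β1 := by
  have harg : 0 ≤ (α1 * β1 - α0 * β2) / β2 := div_nonneg h1 hβ2.le
  have hk2n : 0 ≤ k2 := hk2 ▸ Real.sqrt_nonneg _
  have hk2sq : k2 ^ 2 = (α1 * β1 - α0 * β2) / β2 := by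
    rw [hk2, Real.sq_sqrt harg]
  have hk1n : 0 ≤ k1 := by
    rw [hk1, sub_nonneg]
    have h : k2 ^ 2 ≤ (α1 / β2) ^ 2 := by
      rw [hk2sq, div_pow, div_le_div_iff₀ hβ2 (by positivity)]
      nlinarith
    have ha : (0:ℝ) ≤ α1 / β2 := by positivity
    nlinarith [sq_nonneg (α1 / β2 - k2), sq_nonneg (α1 / β2 + k2)]
  have hk3n : 0 ≤ k3 := by
    rw [hk3, sub_nonneg]
    have h : k2 ^ 2 ≤ β1 ^ 2 := by
      rw [hk2sq, div_le_iff₀ hβ2]; nlinarith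
    nlinarith
  have hsum : k1 + k2 = α1 / β2 := by rw [hk1]; ring
  refine ⟨hb ▸ hβ3, hc ▸ hβ2, hk1n, hk2n, hk3n, ?_, ?_, ?_, ?_⟩
  · rw [hb, hsum]; field_simp; linarith [h4]
  · rw [hc, hsum]; field_simp
  · have : k1 * k2 + k2 * k3 + k1 * k3 = (α1 / β2) * β1 - k2 ^ 2 := by
      rw [hk1, hk3]; ring
    rw [this, hk2sq]; field_simp; ring
  · rw [hk3]; ring
end

section
/- Let α0, α1, α2, α3, β1, β2, β3 be real numbers with α3, β2, β3 > 0, α0, α1, α2, β1 ≥ 0, satisfying α1·β3 + α2·β2 ≥ α3·β1, α2·β2 + α3·β1 ≥ α1·β3, α1·β3 + α3·β1 ≥ α2·β2, α3 = β2·β3, and α1²·β3² + α2²·β2² + α3²·β1² + 4·α0·α3² = 2·(α1·β3·α2·β2 + α2·β2·α3·β1 + α3·β1·α1·β3). Define b = β3, c = β2, k1 = (α1·β3 + α2·β2 − α3·β1)/(2·α3), k2 = (α2·β2 − α1·β3 + α3·β1)/(2·α3), k3 = (α1·β3 − α2·β2 + α3·β1)/(2·α3). Then b, c > 0, k1, k2,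 k3 ≥ 0, b·c = α3, b·(k1 + k2) = α2, c·(k1 + k3) = α1, k2 + k3 = β1, and k1·k2 + k2·k3 + k1·k3 = α0. -/
theorem stmt_13 (α0 α1 α2 α3 β1 β2 β3 : ℝ)
    (hα3 : 0 < α3) (hβ2 : 0 < β2) (hβ3 : 0 < β3)
    (hα0 : 0 ≤ α0) (hα1 : 0 ≤ α1) (hα2 : 0 ≤ α2) (hβ1 : 0 ≤ β1)
    (h1 : α1 * β3 + α2 * β2 ≥ α3 * β1)
    (h2 : α2 * β2 + α3 * β1 ≥ α1 * β3)
    (h3 : α1 * β3 + α3 * β1 ≥ α2 * β2)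
    (h4 : α3 = β2 * β3)
    (h5 : α1 ^ 2 * β3 ^ 2 + α2 ^ 2 * β2 ^ 2 + α3 ^ 2 * β1 ^ 2 + 4 * α0 * α3 ^ 2
      = 2 * (α1 * β3 * (α2 * β2) + α2 * β2 * (α3 * β1) + α3 * β1 * (α1 * β3)))
    (b c k1 k2 k3 : ℝ)
    (hb : b = β3) (hc : c = β2)
    (hk1 : k1 = (α1 * β3 + α2 * β2 - α3 * β1) / (2 * α3))
    (hk2 : k2 = (α2 * β2 - α1 * β3 + α3 * β1) / (2 * α3))
    (hk3 : k3 = (α1 * β3 - α2 * β2 + α3 * β1) / (2 * α3)) :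
    0 < b ∧ 0 < c ∧ 0 ≤ k1 ∧ 0 ≤ k2 ∧ 0 ≤ k3 ∧
    b * c = α3 ∧ b * (k1 + k2) = α2 ∧ c * (k1 + k3) = α1 ∧
    k2 + k3 = β1 ∧ k1 * k2 + k2 * k3 + k1 * k3 = α0 := by
  have hα3' : α3 ≠ 0 := ne_of_gt hα3
  subst hb hc hk1 hk2 hk3
  refine ⟨hβ3, hβ2, ?_, ?_, ?_, ?_, ?_, ?_, ?_, ?_⟩
  · apply div_nonneg (by linarith) (by linarith)
  · apply div_nonneg (by linarith) (by linarith)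
  · apply div_nonneg (by linarith) (by linarith)
  · linarith [h4]
  · field_simp; nlinarith [h4]
  · field_simp; nlinarith [h4]
  · field_simp; linarith
  · field_simp; nlinarith [h5]
end

section
/- Let G be the real symmetric matrix [[G1, G4, G5], [G4, G2, G6], [G5, G6, G3]] with G4·G5·G6 > 0. If G1·G2·G3 + G4·G5·G6 − G1·G6² − G2·G5² = 0, then G3 < G5·G6/G4; if G1·G2·G3 + G4·G5·G6 − G1·G6² − G3·G4² = 0, then G2 < G4·G6/G5; if G1·G2·G3 + G4·G5·G6 − G3·G4² − G2·G5² = 0, then G1 < G4·G5/G6 — in each case under the additional assumption that G is positive semidefinite with all first-order and second-order minors nonzero. -/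
theorem stmt_17 (G1 G2 G3 G4 G5 G6 : ℝ)
    (hprod : G4 * G5 * G6 > 0)
    (hpsd : Matrix.PosSemidef (!![G1, G4, G5; G4, G2, G6; G5, G6, G3] : Matrix (Fin 3) (Fin 3) ℝ))
    (h1 : G1 ≠ 0) (h2 : G2 ≠ 0) (h3 : G3 ≠ 0)
    (h4 : G4 ≠ 0) (h5 : G5 ≠ 0) (h6 : G6 ≠ 0)
    (m1 : G1 * G2 - G4 ^ 2 ≠ 0) (m2 : G1 * G3 - G5 ^ 2 ≠ 0)
    (m3 : G2 * G3 - G6 ^ 2 ≠ 0) (m4 : G1 * G6 - G4 * G5 ≠ 0)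
    (m5 : G4 * G6 - G2 * G5 ≠ 0) (m6 : G3 * G4 - G5 * G6 ≠ 0) :
    (G1 * G2 * G3 + G4 * G5 * G6 - G1 * G6 ^ 2 - G2 * G5 ^ 2 = 0 → G3 < G5 * G6 / G4) ∧
    (G1 * G2 * G3 + G4 * G5 * G6 - G1 * G6 ^ 2 - G3 * G4 ^ 2 = 0 → G2 < G4 * G6 / G5) ∧
    (G1 * G2 * G3 + G4 * G5 * G6 - G3 * G4 ^ 2 - G2 * G5 ^ 2 = 0 → G1 < G4 * G5 / G6) := by
  have hdet : (0:ℝ) ≤ (!![G1, G4, G5; G4, G2, G6; G5, G6, G3] : Matrix (Fin 3) (Fin 3) ℝ).det := by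
    rw [hpsd.1.det_eq_prod_eigenvalues, Fin.prod_univ_three]
    have e0 := hpsd.eigenvalues_nonneg 0
    have e1 := hpsd.eigenvalues_nonneg 1
    have e2 := hpsd.eigenvalues_nonneg 2
    exact mul_nonneg (mul_nonneg (RCLike.ofReal_nonneg.mpr e0) (RCLike.ofReal_nonneg.mpr e1))
      (RCLike.ofReal_nonneg.mpr e2)
  rw [Matrix.det_fin_three] at hdet
  simp [Matrix.cons_val_zero, Matrix.cons_val_one] at hdet
  refine ⟨fun h => ?_, fun h => ?_, fun h => ?_⟩
  · have key : G4 * (G5 * G6 - G3 * G4) > 0 := by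
      rcases lt_or_eq_of_le (by nlinarith : (0:ℝ) ≤ G4 * (G5 * G6 - G3 * G4)) with hk | hk
      · exact hk
      · exfalso
        have : G5 * G6 - G3 * G4 = 0 := by
          rcases mul_eq_zero.mp hk.symm with h' | h'
          · exact absurd h' h4
          · exact h'
        exact m6 (by linarith)
    have heq : G4 * (G5 * G6 - G3 * G4) / G4 ^ 2 = G5 * G6 / G4 - G3 := by
      field_simp
    have := div_pos key (by positivity : (0:ℝ) < G4 ^ 2)
    linarith [heq ▸ this]
  · have key : G5 * (G4 * G6 - G2 * G5) > 0 := by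
      rcases lt_or_eq_of_le (by nlinarith : (0:ℝ) ≤ G5 * (G4 * G6 - G2 * G5)) with hk | hk
      · exact hk
      · exfalso
        rcases mul_eq_zero.mp hk.symm with h' | h'
        · exact h5 h'
        · exact m5 h'
    have heq : G5 * (G4 * G6 - G2 * G5) / G5 ^ 2 = G4 * G6 / G5 - G2 := by
      field_simp
    have := div_pos key (by positivity : (0:ℝ) < G5 ^ 2)
    linarith [heq ▸ this]
  · have key : G6 * (G4 * G5 - G1 * G6) > 0 := by
      rcases lt_or_eq_of_le (by nlinarith : (0:ℝ) ≤ G6 * (G4 * G5 - G1 * G6)) with hk | hk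
      · exact hk
      · exfalso
        rcases mul_eq_zero.mp hk.symm with h' | h'
        · exact h6 h'
        · exact m4 (by linarith)
    have heq : G6 * (G4 * G5 - G1 * G6) / G6 ^ 2 = G4 * G5 / G6 - G1 := by
      field_simp
    have := div_pos key (by positivity : (0:ℝ) < G6 ^ 2)
    linarith [heq ▸ this]
end
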